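/- If f(z) = Σ a_k z^k is analytic on the unit disk D with |f(z)| ≤ 1 for all z in D, then Σ_{k=0}^∞ |a_k| r^k ≤ 1 for all r ≤ 1/3. -/

import Mathlib

open Metric Complex FormalMultilinearSeries

lemma ofScalars_coeff' (c : ℕ → ℂ) (n : ℕ) : (FormalMultilinearSeries.ofScalars ℂ c).coeff n = c n := by
  show FormalMultilinearSeries.ofScalars ℂ c n (fun _ => 1) = c n
  rw [FormalMultilinearSeries.ofScalars_apply_eq]; simp

lemma summ_aux {c : ℕ → ℂ} {g : ℂ → ℂ}
    (h : ∀ z ∈ Metric.ball (0:ℂ) 1, HasSum (fun k => c k * z ^ k) (g z))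
    {ρ : ℝ} (h0 : 0 ≤ ρ) (h1 : ρ < 1) : Summable (fun k => ‖c k‖ * ρ ^ k) := by
  set s : ℝ := (ρ + 1) / 2 with hs
  have hρs : ρ < s := by rw [hs]; linarith
  have hs0 : 0 < s := by positivity
  have hs1 : s < 1 := by rw [hs]; linarith
  have hz : (s : ℂ) ∈ Metric.ball (0:ℂ) 1 := by
    simp only [Metric.mem_ball, dist_zero_right, Complex.norm_real, Real.norm_of_nonneg hs0.le]
    exact hs1
  have hsum := (h _ hz).summable
  have hb := hsum.tendsto_atTop_zero.norm.bddAbove_range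
  obtain ⟨C, hC⟩ := hb
  have hCmem : ∀ k, ‖c k * (s:ℂ) ^ k‖ ≤ C := fun k => hC (Set.mem_range_self k)
  have key : ∀ k, ‖c k‖ * ρ ^ k ≤ C * (ρ / s) ^ k := by
    intro k
    have h1 : ‖c k‖ * s ^ k ≤ C := by
      have := hCmem k
      rwa [norm_mul, norm_pow, Complex.norm_real, Real.norm_of_nonneg hs0.le] at this
    have : ‖c k‖ * ρ ^ k = (‖c k‖ * s ^ k) * (ρ / s) ^ k := by
      rw [mul_assoc, ← mul_pow, mul_div_cancel₀ ρ hs0.ne']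
    rw [this]
    apply mul_le_mul_of_nonneg_right h1 (by positivity)
  apply Summable.of_nonneg_of_le (fun k => by positivity) key
  exact (summable_geometric_of_lt_one (by positivity) (by rw [div_lt_one hs0]; exact hρs)).mul_left C

lemma fps_aux {c : ℕ → ℂ} {g : ℂ → ℂ}
    (h : ∀ z ∈ Metric.ball (0:ℂ) 1, HasSum (fun k => c k * z ^ k) (g z)) :
    HasFPowerSeriesOnBall g (ofScalars ℂ c) 0 1 := by
  constructor
  · apply ENNReal.le_of_forall_nnreal_lt
    intro r hr
    apply le_radius_of_summable
    have hr1 : (r : ℝ) < 1 := by exact_mod_cast hr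
    have := summ_aux h r.coe_nonneg hr1
    simp only [ofScalars_norm]
    exact this
  · exact one_pos
  · intro y hy
    have hy' : y ∈ Metric.ball (0:ℂ) 1 := by
      rw [EMetric.mem_ball, edist_zero_right] at hy
      simp [Metric.mem_ball, Complex.dist_eq]
      exact_mod_cast (by simpa [enorm_eq_nnnorm] using hy : (‖y‖₊ : ENNReal) < 1)
    have := h y hy'
    simp only [ofScalars_apply_eq, smul_eq_mul, zero_add, ofScalars_coeff']
    exact this
lemma basics_aux {c : ℕ → ℂ} {g : ℂ → ℂ}
    (h : ∀ z ∈ Metric.ball (0:ℂ) 1, HasSum (fun k => c k * z ^ k) (g z)) :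
    DifferentiableOn ℂ g (Metric.ball 0 1) ∧ g 0 = c 0 ∧ deriv g 0 = c 1 := by
  have H := fps_aux h
  have hsub : Metric.ball (0:ℂ) 1 ⊆ Metric.eball (0:ℂ) 1 := by
    intro z hz
    rw [Metric.mem_eball, edist_zero_right]
    rw [Metric.mem_ball, dist_zero_right] at hz
    rw [enorm_eq_nnnorm]
    exact_mod_cast (by exact_mod_cast hz : ‖z‖₊ < 1)
  refine ⟨H.differentiableOn.mono hsub, ?_, ?_⟩
  · have := H.coeff_zero (fun _ => 1)
    rw [show (fun _ : Fin 0 => (1:ℂ)) = (fun _ : Fin 0 => (1:ℂ)) from rfl, ofScalars_apply_eq] at this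
    simpa using this.symm
  · have := H.hasFPowerSeriesAt.deriv
    rw [ofScalars_apply_eq] at this
    simpa using this
lemma mobius_norm_le {w b : ℂ} (hw : ‖w‖ ≤ 1) (hb : ‖b‖ ≤ 1) :
    ‖w - b‖ ≤ ‖1 - (starRingEnd ℂ) b * w‖ := by
  have hw' : normSq w ≤ 1 := by
    rw [Complex.normSq_eq_norm_sq]; nlinarith [norm_nonneg w]
  have hb' : normSq b ≤ 1 := by
    rw [Complex.normSq_eq_norm_sq]; nlinarith [norm_nonneg b]
  have key : normSq (w - b) ≤ normSq (1 - (starRingEnd ℂ) b * w) := by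
    simp only [Complex.normSq_apply, Complex.sub_re, Complex.sub_im, Complex.mul_re,
      Complex.mul_im, Complex.conj_re, Complex.conj_im, Complex.one_re, Complex.one_im] at *
    nlinarith [sq_nonneg (w.re - b.re), sq_nonneg (w.im - b.im)]
  rw [← sq_le_sq₀ (norm_nonneg _) (norm_nonneg _), ← Complex.normSq_eq_norm_sq, ← Complex.normSq_eq_norm_sq]
  exact key

lemma schwarz_pick_center {H : ℂ → ℂ}
    (hd : DifferentiableOn ℂ H (Metric.ball 0 1))
    (hb : ∀ z ∈ Metric.ball (0:ℂ) 1, ‖H z‖ ≤ 1) :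
    ‖deriv H 0‖ ≤ 1 - ‖H 0‖ ^ 2 := by
  have h0mem : (0:ℂ) ∈ Metric.ball (0:ℂ) 1 := mem_ball_self one_pos
  have hH0 : ‖H 0‖ ≤ 1 := hb 0 h0mem
  by_cases hc : ‖H 0‖ < 1
  · -- Möbius transform case
    set b := H 0 with hbdef
    have hb2 : normSq b < 1 := by rw [Complex.normSq_eq_norm_sq]; nlinarith [norm_nonneg b]
    have hne : ∀ z ∈ Metric.ball (0:ℂ) 1, 1 - (starRingEnd ℂ) b * H z ≠ 0 := by
      intro z hz h0
      have h1 : ‖(starRingEnd ℂ) b * H z‖ ≤ ‖b‖ := by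
        rw [norm_mul, RCLike.norm_conj]
        calc ‖b‖ * ‖H z‖ ≤ ‖b‖ * 1 := by
              exact mul_le_mul_of_nonneg_left (hb z hz) (norm_nonneg b)
          _ = ‖b‖ := mul_one _
      have : (1:ℂ) = (starRingEnd ℂ) b * H z := by linear_combination h0
      rw [← this] at h1
      simp at h1
      exact absurd h1 (not_le.mpr hc)
    set G : ℂ → ℂ := fun z => (H z - b) / (1 - (starRingEnd ℂ) b * H z) with hGdef
    have hGd : DifferentiableOn ℂ G (Metric.ball 0 1) := by
      apply DifferentiableOn.div
      · exact hd.sub_const b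
      · exact (differentiableOn_const 1).sub ((differentiableOn_const _).mul hd)
      · exact hne
    have hG0 : G 0 = 0 := by simp [hGdef, ← hbdef]
    have hGb : ∀ z ∈ Metric.ball (0:ℂ) 1, ‖G z‖ ≤ 1 := by
      intro z hz
      rw [hGdef]
      simp only [norm_div]
      rcases eq_or_ne (1 - (starRingEnd ℂ) b * H z) 0 with h | h
      · simp [h]
      · rw [div_le_one (norm_pos_iff.mpr h)]
        exact mobius_norm_le (hb z hz) hH0
    -- Schwarz lemma: ‖deriv G 0‖ ≤ 1
    have hGderiv : ‖deriv G 0‖ ≤ 1 := by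
      apply le_of_forall_pos_le_add
      intro ε hε
      have := Complex.norm_deriv_le_div_of_mapsTo_ball (R₂ := 1 + ε) hGd ?_ one_pos
      · calc ‖deriv G 0‖ ≤ (1+ε)/1 := this
          _ = 1 + ε := by ring
      · intro z hz
        rw [Metric.mem_closedBall, hG0, dist_zero_right]
        calc ‖G z‖ ≤ 1 := hGb z hz
          _ ≤ 1 + ε := by linarith
    -- compute deriv G 0
    have hHd : HasDerivAt H (deriv H 0) 0 :=
      (hd.differentiableAt (isOpen_ball.mem_nhds h0mem)).hasDerivAt
    have hu : HasDerivAt (fun z => H z - b) (deriv H 0) 0 := hHd.sub_const b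
    have hv : HasDerivAt (fun z => 1 - (starRingEnd ℂ) b * H z)
        (-((starRingEnd ℂ) b * deriv H 0)) 0 := (hHd.const_mul ((starRingEnd ℂ) b)).const_sub 1
    have hv0 : (1 - (starRingEnd ℂ) b * H 0) ≠ 0 := hne 0 h0mem
    have hdG := (hu.div hv hv0).deriv
    have hval : 1 - (starRingEnd ℂ) b * H 0 = ((1 - normSq b : ℝ) : ℂ) := by
      rw [← hbdef]
      push_cast
      rw [show (starRingEnd ℂ) b * b = (normSq b : ℂ) by rw [mul_comm, Complex.mul_conj]]
    have hGval : deriv G 0 = deriv H 0 / ((1 - normSq b : ℝ) : ℂ) := by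
      show deriv ((fun z => H z - b) / fun z => 1 - (starRingEnd ℂ) b * H z) 0 = _
      rw [hdG, ← hbdef]
      rw [show H 0 - b = 0 by rw [← hbdef]; ring]
      have hvne : ((1 - normSq b : ℝ) : ℂ) ≠ 0 := by rw [← hval]; exact hv0
      rw [hval]
      push_cast at hvne ⊢
      rw [pow_two]
      simp only [zero_mul, sub_zero]
      rw [mul_div_mul_right _ _ hvne]

    have hpos : (0:ℝ) < 1 - normSq b := by linarith
    have : ‖deriv H 0‖ = ‖deriv G 0‖ * (1 - normSq b) := by
      rw [hGval, norm_div]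
      rw [Complex.norm_real, Real.norm_of_nonneg hpos.le]
      field_simp
    rw [this, ← hbdef, Complex.normSq_eq_norm_sq] at *
    nlinarith [norm_nonneg (deriv G 0)]
  · -- maximum modulus case
    have heq : ‖H 0‖ = 1 := le_antisymm hH0 (not_lt.mp hc)
    have hmax : IsMaxOn (norm ∘ H) (Metric.ball (0:ℂ) 1) 0 := by
      intro z hz
      simp only [Set.mem_setOf_eq, Function.comp_apply, heq]
      exact hb z hz
    have hEq := Complex.eqOn_of_isPreconnected_of_isMaxOn_norm
      ((convex_ball (0:ℂ) 1).isPreconnected) isOpen_ball hd h0mem hmax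
    have hev : H =ᶠ[nhds (0:ℂ)] (fun _ => H 0) := by
      filter_upwards [isOpen_ball.mem_nhds h0mem] with z hz
      exact hEq hz
    rw [hev.deriv_eq, deriv_const]
    simp [heq]
lemma coeff_bound {a : ℕ → ℂ} {f : ℂ → ℂ}
    (hf : ∀ z ∈ Metric.ball (0:ℂ) 1, HasSum (fun k => a k * z ^ k) (f z))
    (hb : ∀ z ∈ Metric.ball (0:ℂ) 1, ‖f z‖ ≤ 1)
    (n : ℕ) (hn : 1 ≤ n) : ‖a n‖ ≤ 1 - ‖a 0‖ ^ 2 := by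
  have hnne : n ≠ 0 := by omega
  have hn0 : (n:ℂ) ≠ 0 := Nat.cast_ne_zero.mpr hnne
  set ω : ℂ := Complex.exp (2 * Real.pi * Complex.I / n) with hω
  have hprim : IsPrimitiveRoot ω n := Complex.isPrimitiveRoot_exp n hnne
  have hωn : ω ^ n = 1 := hprim.pow_eq_one
  have hωnorm : ‖ω‖ = 1 := Complex.norm_eq_one_of_pow_eq_one hωn hnne
  have key : ∀ w ∈ Metric.ball (0:ℂ) 1,
      ∃ S, HasSum (fun m => a (n*m) * w ^ m) S ∧ ‖S‖ ≤ 1 := by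
    intro w hw
    rw [Metric.mem_ball, dist_zero_right] at hw
    obtain ⟨z, hz⟩ := IsAlgClosed.exists_pow_nat_eq w (by omega : 0 < n)
    have hzn : ‖z‖ < 1 := by
      by_contra hcon
      push_neg at hcon
      have h1 : (1:ℝ) ≤ ‖z‖ ^ n := one_le_pow₀ hcon
      rw [← norm_pow, hz] at h1; linarith
    have hmem : ∀ j : ℕ, ω ^ j * z ∈ Metric.ball (0:ℂ) 1 := by
      intro j
      rw [Metric.mem_ball, dist_zero_right, norm_mul, norm_pow, hωnorm, one_pow, one_mul]
      exact hzn
    have hsum1 : HasSum (fun k => ∑ j ∈ Finset.range n, a k * (ω ^ j * z) ^ k)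
        (∑ j ∈ Finset.range n, f (ω ^ j * z)) :=
      hasSum_sum fun j _ => hf _ (hmem j)
    have hterm : (fun k => ∑ j ∈ Finset.range n, a k * (ω ^ j * z) ^ k)
        = fun k => if n ∣ k then (n:ℂ) * (a k * z ^ k) else 0 := by
      funext k
      have hrw : ∀ j, a k * (ω ^ j * z) ^ k = a k * z ^ k * ((ω ^ k) ^ j) := by
        intro j
        rw [mul_pow, ← pow_mul, ← pow_mul, mul_comm j k, pow_mul]
        ring
      simp only [hrw]
      rw [← Finset.mul_sum]
      by_cases hdvd : n ∣ k
      · have h1 : ω ^ k = 1 := (hprim.pow_eq_one_iff_dvd k).mpr hdvd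
        simp only [h1, one_pow, Finset.sum_const, Finset.card_range, nsmul_eq_mul, if_pos hdvd]
        ring
      · have h1 : ω ^ k ≠ 1 := fun hc => hdvd ((hprim.pow_eq_one_iff_dvd k).mp hc)
        rw [geom_sum_eq h1]
        have h2 : (ω ^ k) ^ n = 1 := by rw [← pow_mul, mul_comm, pow_mul, hωn, one_pow]
        rw [if_neg hdvd, h2]
        simp
    rw [hterm] at hsum1
    have hinj : Function.Injective (fun m : ℕ => n * m) := fun x y hxy => by
      have : n * x = n * y := hxy
      exact Nat.eq_of_mul_eq_mul_left (by omega) this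
    have hvan : ∀ k ∉ Set.range (fun m : ℕ => n * m),
        (if n ∣ k then (n:ℂ) * (a k * z ^ k) else 0) = 0 := by
      intro k hk
      rw [if_neg]
      intro ⟨m, hm⟩
      exact hk ⟨m, hm.symm⟩
    have hsum2 := (Function.Injective.hasSum_iff hinj hvan).mpr hsum1
    have hcomp : ((fun k => if n ∣ k then (n:ℂ) * (a k * z ^ k) else 0) ∘ (fun m : ℕ => n * m))
        = fun m => (n:ℂ) * (a (n*m) * w ^ m) := by
      funext m
      simp only [Function.comp_apply, if_pos (Dvd.intro m rfl)]
      rw [pow_mul, hz]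
    rw [hcomp] at hsum2
    refine ⟨(n:ℂ)⁻¹ * ∑ j ∈ Finset.range n, f (ω ^ j * z), ?_, ?_⟩
    · have h3 := hsum2.mul_left ((n:ℂ)⁻¹)
      have h4 : (fun m => (n:ℂ)⁻¹ * ((n:ℂ) * (a (n*m) * w ^ m)))
          = fun m => a (n*m) * w ^ m := by
        funext m
        rw [inv_mul_cancel_left₀ hn0]
      rwa [h4] at h3
    · rw [norm_mul, norm_inv, Complex.norm_natCast]
      have h5 : ‖∑ j ∈ Finset.range n, f (ω ^ j * z)‖ ≤ n := by
        calc ‖∑ j ∈ Finset.range n, f (ω ^ j * z)‖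
            ≤ ∑ j ∈ Finset.range n, ‖f (ω ^ j * z)‖ := norm_sum_le _ _
          _ ≤ ∑ _j ∈ Finset.range n, (1:ℝ) := Finset.sum_le_sum fun j _ => hb _ (hmem j)
          _ = n := by simp
      have hnpos : (0:ℝ) < n := by exact_mod_cast Nat.pos_of_ne_zero hnne
      calc (n:ℝ)⁻¹ * ‖∑ j ∈ Finset.range n, f (ω ^ j * z)‖
          ≤ (n:ℝ)⁻¹ * n := by
            exact mul_le_mul_of_nonneg_left h5 (by positivity)
        _ = 1 := inv_mul_cancel₀ hnpos.ne'
  set T : ℂ → ℂ := fun w => ∑' m, a (n*m) * w ^ m with hT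
  have hTsum : ∀ w ∈ Metric.ball (0:ℂ) 1, HasSum (fun m => a (n*m) * w ^ m) (T w) := by
    intro w hw
    obtain ⟨S, hS, _⟩ := key w hw
    rw [hT]
    simpa [hS.tsum_eq] using hS
  have hTb : ∀ w ∈ Metric.ball (0:ℂ) 1, ‖T w‖ ≤ 1 := by
    intro w hw
    obtain ⟨S, hS, hSb⟩ := key w hw
    rw [hT]
    simpa [hS.tsum_eq] using hSb
  obtain ⟨hdiff, h0, h1⟩ := basics_aux hTsum
  have hfin := schwarz_pick_center hdiff hTb
  rw [h0, h1] at hfin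
  simpa using hfin
set_option maxHeartbeats 1000000 in
theorem bohr_classical (f : ℂ → ℂ) (a : ℕ → ℂ)
    (hf : ∀ z ∈ Metric.ball (0 : ℂ) 1, HasSum (fun k => a k * z ^ k) (f z))
    (hb : ∀ z ∈ Metric.ball (0 : ℂ) 1, ‖f z‖ ≤ 1)
    (r : ℝ) (hr0 : 0 ≤ r) (hr : r ≤ 1 / 3) :
    ∑' k : ℕ, ‖a k‖ * r ^ k ≤ 1 := by
  have hr1 : r < 1 := by linarith
  have hsum := summ_aux hf hr0 hr1
  obtain ⟨_, h0, _⟩ := basics_aux hf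
  have ha0 : ‖a 0‖ ≤ 1 := by rw [← h0]; exact hb 0 (mem_ball_self one_pos)
  set c := ‖a 0‖ with hc
  have hc0 : 0 ≤ c := norm_nonneg _
  have hM : ∀ k, ‖a (k+1)‖ ≤ 1 - c ^ 2 := fun k => coeff_bound hf hb (k+1) (by omega)
  rw [hsum.tsum_eq_zero_add]
  simp only [pow_zero, mul_one]
  have hsum' : Summable (fun k => ‖a (k+1)‖ * r ^ (k+1)) := (summable_nat_add_iff 1).mpr hsum
  have hgeom : Summable (fun k : ℕ => (1 - c ^ 2) * r ^ (k+1)) := by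
    apply Summable.mul_left
    exact ((summable_geometric_of_lt_one hr0 hr1).mul_left r).congr (by
      intro k; rw [pow_succ, mul_comm])
  have htail : ∑' k : ℕ, ‖a (k+1)‖ * r ^ (k+1) ≤ ∑' k : ℕ, (1 - c ^ 2) * r ^ (k+1) := by
    apply Summable.tsum_le_tsum _ hsum' hgeom
    intro k
    exact mul_le_mul_of_nonneg_right (hM k) (by positivity)
  have hgeoval : ∑' k : ℕ, (1 - c ^ 2) * r ^ (k+1) = (1 - c ^ 2) * r * (1 - r)⁻¹ := by
    have : (fun k : ℕ => (1 - c ^ 2) * r ^ (k+1)) = fun k : ℕ => ((1 - c ^ 2) * r) * r ^ k := by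
      funext k; rw [pow_succ]; ring
    rw [this, tsum_mul_left, tsum_geometric_of_lt_one hr0 hr1]
  rw [hgeoval] at htail
  have ht : (1 - r) * (1 - r)⁻¹ = 1 := mul_inv_cancel₀ (by linarith)
  have ht0 : (0:ℝ) < (1 - r)⁻¹ := inv_pos.mpr (by linarith)
  have hkey : 0 ≤ (1 - c) * (1 - r * (2 + c)) * (1 - r)⁻¹ := by
    apply mul_nonneg (mul_nonneg (by linarith) (by nlinarith)) ht0.le
  nlinarith [htail, hkey, ht]
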